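/- Let n, m ≥ 2 be positive integers and define a : ℕ → ℕ by a(1) = n and a(t+1) = a(t) + n - ⌊a(t)/m⌋. Then a(t) ≤ n·m for all t ≥ 1. -/
import Mathlib


/-- Frege's total-score recursion never exceeds n·m. -/
theorem frege_total_score_bounded (n m : ℕ) (hn : 1 ≤ n) (hm : 2 ≤ m)
    (a : ℕ → ℕ) (ha1 : a 1 = n)
    (harec : ∀ t, 1 ≤ t → a (t + 1) = a t + n - a t / m) :
    ∀ t, 1 ≤ t → a t ≤ n * m := by
  intro t ht
  induction t, ht using Nat.le_induction with
  | base => rw [ha1]; nlinarith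
  | succ t ht ih =>
    rw [harec t ht]
    have h1 := Nat.div_add_mod (a t) m
    have h2 := Nat.mod_lt (a t) (show 0 < m by omega)
    have hq : a t / m ≤ n := by
      have h3 := Nat.div_le_div_right (c := m) ih
      rwa [Nat.mul_div_cancel _ (show 0 < m by omega)] at h3
    rcases eq_or_lt_of_le hq with h | h
    · have hmn : m * n = n * m := Nat.mul_comm m n
      have hthis : m * (a t / m) = m * n := by rw [h]
      have hsub : a t + n ≤ n * m + a t / m := by nlinarith
      omega
    · have hsub : a t + n ≤ n * m + a t / m := by nlinarith
      omega
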